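/- Let λ ∈ ℝ^{n+1} be weakly decreasing and P_λ = conv(S_{n+1}·λ). A dominant point x (i.e. x₁ ≥ x₂ ≥ ... ≥ x_{n+1}, Σxᵢ = Σλᵢ, x ∈ P_λ) lies on the boundary ∂P_λ if and only if at least one of the inequalities x₁ + ... + x_k ≤ λ₁ + ... + λ_k (1 ≤ k ≤ n) holds with equality, assuming λ has at least two distinct coordinate values. -/

import Mathlib

open Finset

def permPolytope {n : ℕ} (l : Fin n → ℝ) : Set (Fin n → ℝ) :=
  convexHull ℝ {y | ∃ σ : Equiv.Perm (Fin n), y = l ∘ σ}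

namespace PermPoly

variable {n : ℕ}

/-- partial sum of the first `k` coordinates -/
noncomputable def psum (g : Fin (n + 1) → ℝ) (k : ℕ) : ℝ :=
  ∑ i ∈ Finset.univ.filter (fun i : Fin (n + 1) => (i : ℕ) < k), g i

lemma strictMono_nat_le {m : ℕ} {f : Fin m → ℕ} (hf : StrictMono f) :
    ∀ j : Fin m, (j : ℕ) ≤ f j := by
  have key : ∀ N : ℕ, ∀ j : Fin m, (j : ℕ) = N → N ≤ f j := by
    intro N
    induction N with
    | zero => intro j _; omega
    | succ p ih =>
        intro j hj
        have hp : p < m := by omega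
        have h1 : (⟨p, hp⟩ : Fin m) < j := by rw [Fin.lt_def, Fin.val_mk]; omega
        have h2 := hf h1
        have h3 := ih ⟨p, hp⟩ rfl
        omega
  intro j
  exact key (j : ℕ) j rfl

lemma psum_eq (g : Fin (n + 1) → ℝ) {m : ℕ} (hm : m ≤ n + 1) :
    psum g m = ∑ j : Fin m, g (Fin.castLE hm j) := by
  unfold psum
  refine (Finset.sum_bij' (i := fun (j : Fin m) _ => Fin.castLE hm j)
    (j := fun i hi => (⟨(i : ℕ), (Finset.mem_filter.mp hi).2⟩ : Fin m)) ?_ ?_ ?_ ?_ ?_).symm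
  · intro j _
    simp only [Finset.mem_filter, Finset.mem_univ, true_and]
    exact (j : Fin m).isLt
  · intro i hi; exact Finset.mem_univ _
  · intro j _; rfl
  · intro i hi; rfl
  · intro j _; rfl

lemma card_filter_lt {m : ℕ} (hm : m ≤ n + 1) :
    (Finset.univ.filter (fun i : Fin (n + 1) => (i : ℕ) < m)).card = m := by
  classical
  have := psum_eq (n := n) (fun _ => (1 : ℝ)) hm
  simp only [psum] at this
  have h1 : ((Finset.univ.filter (fun i : Fin (n + 1) => (i : ℕ) < m)).card : ℝ) = (m : ℝ) := by
    simpa [Finset.sum_const] using this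
  exact_mod_cast h1

lemma sum_le_psum (l : Fin (n + 1) → ℝ) (hdec : ∀ i j : Fin (n + 1), i ≤ j → l j ≤ l i)
    (B : Finset (Fin (n + 1))) : ∑ i ∈ B, l i ≤ psum l B.card := by
  have hm : B.card ≤ n + 1 := by simpa using Finset.card_le_univ B
  have h1 : ∑ i ∈ B, l i = ∑ j : Fin B.card, l (B.orderEmbOfFin rfl j) := by
    rw [← Finset.sum_coe_sort B l]
    exact (Equiv.sum_comp (B.orderIsoOfFin rfl).toEquiv (fun i : B => l i)).symm
  rw [h1, psum_eq l hm]
  apply Finset.sum_le_sum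
  intro j _
  apply hdec
  have hsm : StrictMono (fun j : Fin B.card => ((B.orderEmbOfFin rfl j : Fin (n + 1)) : ℕ)) :=
    fun a b hab => by exact_mod_cast (B.orderEmbOfFin rfl).strictMono hab
  have := strictMono_nat_le hsm j
  exact Fin.le_def.mpr (by simpa using this)

lemma isClosed_permPolytope (l : Fin (n + 1) → ℝ) : IsClosed (permPolytope l) := by
  have h : {y | ∃ σ : Equiv.Perm (Fin (n + 1)), y = l ∘ σ} =
      Set.range (fun σ : Equiv.Perm (Fin (n + 1)) => l ∘ σ) := by
    ext y; simp [Set.range, eq_comm]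
  rw [permPolytope, h]
  exact ((Set.finite_range _).isCompact_convexHull ℝ).isClosed

lemma sum_eq_of_mem (l : Fin (n + 1) → ℝ) {z : Fin (n + 1) → ℝ} (hz : z ∈ permPolytope l) :
    ∑ i, z i = ∑ i, l i := by
  have hconv : Convex ℝ {w : Fin (n + 1) → ℝ | (∑ i, w i) = ∑ i, l i} := by
    have : IsLinearMap ℝ (fun w : Fin (n + 1) → ℝ => ∑ i, w i) :=
      ⟨fun a b => by simp [Finset.sum_add_distrib], fun c a => by simp [Finset.mul_sum]⟩
    exact convex_hyperplane this _
  have : permPolytope l ⊆ {w : Fin (n + 1) → ℝ | (∑ i, w i) = ∑ i, l i} := by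
    apply convexHull_min _ hconv
    rintro w ⟨σ, rfl⟩
    exact Equiv.sum_comp σ l
  exact this hz

lemma subset_sum_le (l : Fin (n + 1) → ℝ) (hdec : ∀ i j : Fin (n + 1), i ≤ j → l j ≤ l i)
    {z : Fin (n + 1) → ℝ} (hz : z ∈ permPolytope l) (A : Finset (Fin (n + 1))) :
    ∑ i ∈ A, z i ≤ psum l A.card := by
  have hlin : IsLinearMap ℝ (fun w : Fin (n + 1) → ℝ => ∑ i ∈ A, w i) :=
    ⟨fun a b => by simp [Finset.sum_add_distrib], fun c a => by simp [Finset.mul_sum]⟩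
  have hconv : Convex ℝ {w : Fin (n + 1) → ℝ | (∑ i ∈ A, w i) ≤ psum l A.card} :=
    convex_halfSpace_le hlin _
  have : permPolytope l ⊆ {w : Fin (n + 1) → ℝ | (∑ i ∈ A, w i) ≤ psum l A.card} := by
    apply convexHull_min _ hconv
    rintro w ⟨σ, rfl⟩
    have h1 : ∑ i ∈ A, (l ∘ σ) i = ∑ i ∈ A.image σ, l i := by
      rw [Finset.sum_image (fun a _ b _ h => σ.injective h)]
      rfl
    have h2 : (A.image σ).card = A.card := Finset.card_image_of_injective _ σ.injective
    calc ∑ i ∈ A, (l ∘ σ) i = ∑ i ∈ A.image σ, l i := h1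
      _ ≤ psum l (A.image σ).card := sum_le_psum l hdec _
      _ = psum l A.card := by rw [h2]
  exact this hz

lemma abel (c w : Fin (n + 1) → ℝ) (hc : Monotone c)
    (hw : ∀ k, 1 ≤ k → k ≤ n → psum w k ≤ 0)
    (hw0 : psum w (n + 1) = 0) :
    0 ≤ ∑ i, c i * w i := by
  classical
  set C : ℕ → ℝ := fun k => c ⟨min k n, by omega⟩ with hC
  have hCi : ∀ i : Fin (n + 1), C (i : ℕ) = c i := by
    intro i
    have : min (i : ℕ) n = (i : ℕ) := min_eq_left (by omega)
    simp [hC, this]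
  have htel : ∀ i : Fin (n + 1),
      c i = C n - ∑ k ∈ Finset.Ico (i : ℕ) n, (C (k + 1) - C k) := by
    intro i
    rw [Finset.sum_Ico_eq_sub _ (by omega : (i : ℕ) ≤ n), Finset.sum_range_sub,
      Finset.sum_range_sub, hCi]
    ring
  have huniv : psum w (n + 1) = ∑ i, w i := by
    unfold psum
    congr 1
    apply Finset.filter_true_of_mem
    intro i _; exact i.isLt
  have key : ∑ i, c i * w i
      = C n * (∑ i, w i) - ∑ i : Fin (n + 1), ∑ k ∈ Finset.Ico (i : ℕ) n, (C (k + 1) - C k) * w i := by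
    rw [Finset.mul_sum, ← Finset.sum_sub_distrib]
    apply Finset.sum_congr rfl
    intro i _
    rw [← Finset.sum_mul]
    rw [htel i]
    ring
  -- swap the double sum
  have hswap : ∑ i : Fin (n + 1), ∑ k ∈ Finset.Ico (i : ℕ) n, (C (k + 1) - C k) * w i
      = ∑ k ∈ Finset.range n, (C (k + 1) - C k) * psum w (k + 1) := by
    have h1 : ∀ i : Fin (n + 1), ∑ k ∈ Finset.Ico (i : ℕ) n, (C (k + 1) - C k) * w i
        = ∑ k ∈ Finset.range n, if (i : ℕ) ≤ k then (C (k + 1) - C k) * w i else 0 := by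
      intro i
      rw [Finset.sum_ite, Finset.sum_const_zero, add_zero]
      congr 1
      ext k
      simp only [Finset.mem_Ico, Finset.mem_filter, Finset.mem_range]
      omega
    simp_rw [h1]
    rw [Finset.sum_comm]
    apply Finset.sum_congr rfl
    intro k _
    rw [Finset.sum_ite, Finset.sum_const_zero, add_zero, psum, ← Finset.mul_sum]
    congr 2
    ext i
    simp only [Finset.mem_filter, Finset.mem_univ, true_and]
    omega
  rw [key, hswap, huniv.symm, hw0, mul_zero, zero_sub, neg_nonneg]
  apply Finset.sum_nonpos
  intro k hk
  rw [Finset.mem_range] at hk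
  have h1 : C k ≤ C (k + 1) := by
    apply hc
    rw [Fin.mk_le_mk]
    omega
  have h2 : psum w (k + 1) ≤ 0 := hw k.succ (by omega) (by omega)
  nlinarith

lemma comp_perm_mem (l : Fin (n + 1) → ℝ) {z : Fin (n + 1) → ℝ}
    (hz : z ∈ permPolytope l) (π : Equiv.Perm (Fin (n + 1))) :
    z ∘ π ∈ permPolytope l := by
  classical
  set T : ((Fin (n + 1)) → ℝ) →ₗ[ℝ] ((Fin (n + 1)) → ℝ) := LinearMap.funLeft ℝ ℝ π with hT
  have himg : T '' {y | ∃ σ : Equiv.Perm (Fin (n + 1)), y = l ∘ σ}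
      ⊆ {y | ∃ σ : Equiv.Perm (Fin (n + 1)), y = l ∘ σ} := by
    rintro _ ⟨w, ⟨σ, rfl⟩, rfl⟩
    refine ⟨π.trans σ, ?_⟩
    rfl
  have h1 : T z ∈ T '' (convexHull ℝ {y | ∃ σ : Equiv.Perm (Fin (n + 1)), y = l ∘ σ}) :=
    ⟨z, hz, rfl⟩
  rw [T.image_convexHull] at h1
  exact convexHull_mono himg h1

lemma hlp (l y : Fin (n + 1) → ℝ)
    (hy : ∀ i j : Fin (n + 1), i ≤ j → y j ≤ y i)
    (hps : ∀ k, 1 ≤ k → k ≤ n → psum y k ≤ psum l k)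
    (h0 : ∑ i, y i = ∑ i, l i) : y ∈ permPolytope l := by
  classical
  by_contra hny
  obtain ⟨f, u, hyu, hP⟩ := geometric_hahn_banach_point_closed
    (convex_convexHull ℝ _) (isClosed_permPolytope l) hny
  set c : Fin (n + 1) → ℝ := fun i => f (fun j => if i = j then (1 : ℝ) else 0) with hc
  have hf : ∀ z : Fin (n + 1) → ℝ, f z = ∑ i, z i * c i := by
    intro z
    have h := LinearMap.pi_apply_eq_sum_univ (f : (Fin (n + 1) → ℝ) →ₗ[ℝ] ℝ) z
    simpa [smul_eq_mul, hc] using h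
  set τ := Tuple.sort c with hτ
  have hmono : Monotone (c ∘ τ) := Tuple.monotone_sort c
  have hanti : Antivary (c ∘ τ) y := by
    intro i j hij
    rcases le_or_gt i j with h | h
    · exact absurd hij (not_lt.mpr (hy i j h))
    · exact hmono h.le
  have r1 : ∑ i, (c ∘ τ) i * y i ≤ ∑ i, c i * y i := by
    have h := hanti.sum_smul_le_sum_comp_perm_smul (σ := τ⁻¹)
    simpa [smul_eq_mul, Function.comp, Equiv.Perm.inv_def, Equiv.apply_symm_apply] using h
  have r2 : 0 ≤ ∑ i, (c ∘ τ) i * (y i - l i) := by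
    apply abel _ _ hmono
    · intro k h1 h2
      have h3 := hps k h1 h2
      simp only [psum, Finset.sum_sub_distrib] at *
      linarith
    · simp only [psum]
      have huniv : (Finset.univ.filter (fun i : Fin (n + 1) => (i : ℕ) < n + 1)) =
          Finset.univ := Finset.filter_true_of_mem (fun i _ => i.isLt)
      rw [huniv, Finset.sum_sub_distrib, h0, sub_self]
  have r3 : ∑ i, (c ∘ τ) i * l i ≤ ∑ i, (c ∘ τ) i * y i := by
    have h4 : ∑ i, (c ∘ τ) i * (y i - l i)
        = ∑ i, (c ∘ τ) i * y i - ∑ i, (c ∘ τ) i * l i := by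
      rw [← Finset.sum_sub_distrib]
      apply Finset.sum_congr rfl
      intro i _; ring
    rw [h4] at r2
    linarith
  have r4 : ∑ i, (c ∘ τ) i * l i = f (l ∘ ⇑(τ⁻¹)) := by
    rw [hf]
    rw [← Equiv.sum_comp τ (fun j => (l ∘ ⇑(τ⁻¹)) j * c j)]
    apply Finset.sum_congr rfl
    intro i _
    simp [Function.comp, Equiv.Perm.inv_def, Equiv.symm_apply_apply, mul_comm]
  have hmem : (l ∘ ⇑(τ⁻¹)) ∈ permPolytope l :=
    subset_convexHull ℝ _ ⟨τ⁻¹, rfl⟩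
  have h5 := hP _ hmem
  have h6 : f y = ∑ i, c i * y i := by
    rw [hf]
    apply Finset.sum_congr rfl
    intro i _; ring
  linarith

lemma not_mem_intrinsicInterior_of_max {s : Set (Fin (n + 1) → ℝ)} {x y : Fin (n + 1) → ℝ}
    (hxs : x ∈ s) (hys : y ∈ s) (W : Finset (Fin (n + 1)))
    (hmax : ∀ z ∈ s, ∑ i ∈ W, z i ≤ ∑ i ∈ W, x i)
    (hlt : ∑ i ∈ W, y i < ∑ i ∈ W, x i) :
    x ∉ intrinsicInterior ℝ s := by
  intro hint
  rw [mem_intrinsicInterior] at hint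
  obtain ⟨x', hx'int, hx'coe⟩ := hint
  have hxspan : x ∈ affineSpan ℝ s := subset_affineSpan ℝ s hxs
  have hyspan : y ∈ affineSpan ℝ s := subset_affineSpan ℝ s hys
  have hmem : ∀ t : ℝ, (AffineMap.lineMap y x t : Fin (n + 1) → ℝ) ∈ affineSpan ℝ s := by
    intro t
    have h := AffineSubspace.smul_vsub_vadd_mem (affineSpan ℝ s) t hxspan hyspan hyspan
    simpa [AffineMap.lineMap_apply] using h
  set γ : ℝ → (affineSpan ℝ s : Set (Fin (n + 1) → ℝ)) :=
    fun t => ⟨AffineMap.lineMap y x t, hmem t⟩ with hγ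
  have hcont : Continuous γ :=
    Continuous.subtype_mk AffineMap.lineMap_continuous _
  have hopen : IsOpen (γ ⁻¹' interior ((↑) ⁻¹' s)) := isOpen_interior.preimage hcont
  have h1 : (1 : ℝ) ∈ γ ⁻¹' interior ((↑) ⁻¹' s) := by
    have hg1 : γ 1 = x' := by
      apply Subtype.ext
      simp [hγ, hx'coe]
    rw [Set.mem_preimage, hg1]
    exact hx'int
  obtain ⟨ε, hε, hball⟩ := Metric.isOpen_iff.mp hopen 1 h1
  set t := 1 + ε / 2 with ht
  have htball : t ∈ Metric.ball (1 : ℝ) ε := by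
    rw [Metric.mem_ball, Real.dist_eq, ht]
    rw [abs_of_pos (by linarith)]
    linarith
  have hz : (AffineMap.lineMap y x t : Fin (n + 1) → ℝ) ∈ s := by
    have h2 : γ t ∈ interior (Subtype.val ⁻¹' s) := hball htball
    have h3 : γ t ∈ Subtype.val ⁻¹' s := interior_subset h2
    exact h3
  have hcomp : ∑ i ∈ W, (AffineMap.lineMap y x t : Fin (n + 1) → ℝ) i
      = (∑ i ∈ W, y i) + t * ((∑ i ∈ W, x i) - (∑ i ∈ W, y i)) := by
    have happ : ∀ i, (AffineMap.lineMap y x t : Fin (n + 1) → ℝ) i = y i + t * (x i - y i) := by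
      intro i
      simp only [AffineMap.lineMap_apply_module, Pi.add_apply, Pi.smul_apply, Pi.sub_apply,
        smul_eq_mul]
      ring
    rw [Finset.sum_congr rfl (fun i _ => happ i), Finset.sum_add_distrib, ← Finset.mul_sum,
      Finset.sum_sub_distrib]
  have hle := hmax _ hz
  rw [hcomp, ht] at hle
  nlinarith [mul_pos (half_pos hε) (sub_pos.mpr hlt)]

lemma exists_cross (l : Fin (n + 1) → ℝ) (hdec : ∀ i j : Fin (n + 1), i ≤ j → l j ≤ l i)
    (hne : ∃ i j : Fin (n + 1), l i ≠ l j) {k : ℕ} (h1 : 1 ≤ k) (h2 : k ≤ n) :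
    ∃ i j : Fin (n + 1), (i : ℕ) < k ∧ ¬((j : ℕ) < k) ∧ l j < l i := by
  by_contra h
  push_neg at h
  obtain ⟨a, b, hab⟩ := hne
  apply hab
  have key : ∀ i j : Fin (n + 1), (i : ℕ) < k → ¬((j : ℕ) < k) → l i = l j := by
    intro i j hi hj
    have h4 : i ≤ j := by rw [Fin.le_def]; omega
    exact le_antisymm (h i j hi (not_lt.mp hj)) (hdec i j h4)
  have e : ∀ i : Fin (n + 1), l i = l ⟨k, by omega⟩ := by
    intro i
    by_cases hi : (i : ℕ) < k
    · exact key i ⟨k, by omega⟩ hi (by simp)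
    · have h0 : (((⟨0, by omega⟩ : Fin (n + 1))) : ℕ) < k := by show 0 < k; omega
      rw [← key ⟨0, by omega⟩ i h0 hi, key ⟨0, by omega⟩ ⟨k, by omega⟩ h0 (by simp)]
  rw [e a, e b]

noncomputable def sumLM : (Fin (n + 1) → ℝ) →ₗ[ℝ] ℝ where
  toFun := fun z => ∑ i, z i
  map_add' := fun a b => by simp [Finset.sum_add_distrib]
  map_smul' := fun c a => by simp [Finset.mul_sum]

lemma span_sum_eq (l : Fin (n + 1) → ℝ) {z : Fin (n + 1) → ℝ}
    (hz : z ∈ affineSpan ℝ (permPolytope l)) : ∑ i, z i = ∑ i, l i := by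
  classical
  have hPH : permPolytope l ⊆
      (AffineSubspace.mk' l (LinearMap.ker (sumLM (n := n))) : Set (Fin (n + 1) → ℝ)) := by
    intro w hw
    show w ∈ AffineSubspace.mk' l (LinearMap.ker (sumLM (n := n)))
    rw [AffineSubspace.mem_mk', LinearMap.mem_ker]
    have h1 : sumLM (n := n) (w -ᵥ l) = ∑ i, (w i - l i) := rfl
    rw [h1, Finset.sum_sub_distrib, sum_eq_of_mem l hw, sub_self]
  have hle : affineSpan ℝ (permPolytope l) ≤
      AffineSubspace.mk' l (LinearMap.ker (sumLM (n := n))) := affineSpan_le.mpr hPH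
  have h2 : z ∈ AffineSubspace.mk' l (LinearMap.ker (sumLM (n := n))) := hle hz
  rw [AffineSubspace.mem_mk', LinearMap.mem_ker] at h2
  have h4 : (∑ i, (z i - l i)) = 0 := h2
  rw [Finset.sum_sub_distrib, sub_eq_zero] at h4
  exact h4

end PermPoly

theorem dominant_mem_boundary_iff {n : ℕ} (l : Fin (n + 1) → ℝ)
    (hdec : ∀ i j : Fin (n + 1), i ≤ j → l j ≤ l i)
    (hne : ∃ i j : Fin (n + 1), l i ≠ l j)
    (x : Fin (n + 1) → ℝ)
    (hxdec : ∀ i j : Fin (n + 1), i ≤ j → x j ≤ x i)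
    (hsum : ∑ i, x i = ∑ i, l i)
    (hx : x ∈ permPolytope l) :
    x ∈ intrinsicFrontier ℝ (permPolytope l) ↔
      ∃ k : ℕ, 1 ≤ k ∧ k ≤ n ∧
        ∑ i ∈ Finset.univ.filter (fun i : Fin (n + 1) => (i : ℕ) < k), x i =
          ∑ i ∈ Finset.univ.filter (fun i : Fin (n + 1) => (i : ℕ) < k), l i := by
  classical
  have hfr : x ∈ intrinsicFrontier ℝ (permPolytope l) ↔
      x ∉ intrinsicInterior ℝ (permPolytope l) := by
    rw [← closure_diff_intrinsicInterior, Set.mem_diff]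
    exact ⟨fun h => h.2, fun h => ⟨subset_closure hx, h⟩⟩
  rw [hfr]
  constructor
  · -- boundary → some equality; contrapositive
    intro hnotint
    by_contra hno
    push_neg at hno
    apply hnotint
    have hstrict : ∀ k, 1 ≤ k → k ≤ n → PermPoly.psum x k < PermPoly.psum l k := by
      intro k h1 h2
      have hle : PermPoly.psum x k ≤ PermPoly.psum l k := by
        have h3 := PermPoly.subset_sum_le l hdec hx
          (Finset.univ.filter (fun i : Fin (n + 1) => (i : ℕ) < k))
        rwa [PermPoly.card_filter_lt (by omega)] at h3
      exact lt_of_le_of_ne hle (hno k h1 h2)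
    set U : Set (Fin (n + 1) → ℝ) := ⋂ A : Finset (Fin (n + 1)),
      {z | (1 ≤ A.card ∧ A.card ≤ n) → ∑ i ∈ A, z i < PermPoly.psum l A.card} with hU
    have hUopen : IsOpen U := by
      apply isOpen_iInter_of_finite
      intro A
      by_cases hA : 1 ≤ A.card ∧ A.card ≤ n
      · have he : {z : Fin (n + 1) → ℝ |
            (1 ≤ A.card ∧ A.card ≤ n) → ∑ i ∈ A, z i < PermPoly.psum l A.card}
            = {z : Fin (n + 1) → ℝ | ∑ i ∈ A, z i < PermPoly.psum l A.card} := by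
          ext z; simp [hA]
        rw [he]
        exact isOpen_lt (continuous_finset_sum A (fun i _ => continuous_apply i)) continuous_const
      · have he : {z : Fin (n + 1) → ℝ |
            (1 ≤ A.card ∧ A.card ≤ n) → ∑ i ∈ A, z i < PermPoly.psum l A.card}
            = Set.univ := by
          ext z
          simp only [Set.mem_setOf_eq, Set.mem_univ, iff_true]
          exact fun h => absurd h hA
        rw [he]
        exact isOpen_univ
    have hxU : x ∈ U := by
      rw [hU, Set.mem_iInter]
      intro A
      intro hA
      have h1 : ∑ i ∈ A, x i ≤ PermPoly.psum x A.card := PermPoly.sum_le_psum x hxdec A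
      exact lt_of_le_of_lt h1 (hstrict A.card hA.1 hA.2)
    have hUP : ∀ z : Fin (n + 1) → ℝ, z ∈ U → (∑ i, z i = ∑ i, l i) → z ∈ permPolytope l := by
      intro z hzU hzsum
      set ρ : Equiv.Perm (Fin (n + 1)) := Equiv.trans Fin.revPerm (Tuple.sort z) with hρ
      have hwmono : ∀ i j : Fin (n + 1), i ≤ j → (z ∘ ρ) j ≤ (z ∘ ρ) i := by
        intro i j hij
        have h1 : Fin.rev j ≤ Fin.rev i := Fin.rev_le_rev.mpr hij
        have h2 := Tuple.monotone_sort z h1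
        simpa [hρ, Function.comp, Equiv.trans_apply] using h2
      have hwps : ∀ k, 1 ≤ k → k ≤ n → PermPoly.psum (z ∘ ρ) k ≤ PermPoly.psum l k := by
        intro k h1 h2
        have himg : PermPoly.psum (z ∘ ρ) k
            = ∑ i ∈ (Finset.univ.filter (fun i : Fin (n + 1) => (i : ℕ) < k)).image ρ, z i := by
          rw [PermPoly.psum, Finset.sum_image (fun a _ b _ h => ρ.injective h)]
          rfl
        have hcard : ((Finset.univ.filter (fun i : Fin (n + 1) => (i : ℕ) < k)).image ρ).card
            = k := by
          rw [Finset.card_image_of_injective _ ρ.injective, PermPoly.card_filter_lt (by omega)]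
        have h3 := Set.mem_iInter.mp hzU
          ((Finset.univ.filter (fun i : Fin (n + 1) => (i : ℕ) < k)).image ρ)
        rw [Set.mem_setOf_eq, hcard] at h3
        have h4 := h3 ⟨h1, h2⟩
        rw [himg]
        exact le_of_lt h4
      have hwsum : ∑ i, (z ∘ ρ) i = ∑ i, l i := by
        calc ∑ i, (z ∘ ρ) i = ∑ i, z i := Equiv.sum_comp ρ z
          _ = ∑ i, l i := hzsum
      have hw := PermPoly.hlp l (z ∘ ρ) hwmono hwps hwsum
      have h5 := PermPoly.comp_perm_mem l hw ρ⁻¹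
      have h6 : (z ∘ ⇑ρ) ∘ ⇑(ρ⁻¹) = z := by
        funext i; simp [Function.comp, Equiv.Perm.inv_def, Equiv.apply_symm_apply]
      rwa [h6] at h5
    rw [mem_intrinsicInterior]
    refine ⟨⟨x, subset_affineSpan ℝ _ hx⟩, ?_, rfl⟩
    apply mem_interior.mpr
    refine ⟨Subtype.val ⁻¹' U, ?_, hUopen.preimage continuous_subtype_val, hxU⟩
    intro a ha
    exact hUP a.val ha (PermPoly.span_sum_eq l a.2)
  · rintro ⟨k, hk1, hkn, heq⟩
    obtain ⟨i, j, hik, hjk, hlt⟩ := PermPoly.exists_cross l hdec hne hk1 hkn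
    set W := Finset.univ.filter (fun i : Fin (n + 1) => (i : ℕ) < k) with hW
    have hiW : i ∈ W := by rw [hW]; simp [hik]
    have hjW : j ∉ W := by rw [hW]; simp [hjk]
    set σ := Equiv.swap i j with hσ
    have hysum : ∑ m ∈ W, (l ∘ σ) m < ∑ m ∈ W, l m := by
      rw [← Finset.add_sum_erase W (l ∘ σ) hiW, ← Finset.add_sum_erase W l hiW]
      have h1 : (l ∘ σ) i = l j := by simp [hσ, Equiv.swap_apply_left]
      have h2 : ∀ m ∈ W.erase i, (l ∘ σ) m = l m := by
        intro m hm
        have hmi : m ≠ i := Finset.ne_of_mem_erase hm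
        have hmj : m ≠ j := by
          intro h; rw [h] at hm; exact hjW (Finset.mem_of_mem_erase hm)
        simp [hσ, Equiv.swap_apply_of_ne_of_ne hmi hmj]
      rw [h1, Finset.sum_congr rfl h2]
      linarith
    have hWx : ∑ m ∈ W, x m = ∑ m ∈ W, l m := heq
    apply PermPoly.not_mem_intrinsicInterior_of_max hx
      (subset_convexHull ℝ _ ⟨σ, rfl⟩) W
    · intro zz hzz
      have h3 : ∑ m ∈ W, zz m ≤ PermPoly.psum l W.card := PermPoly.subset_sum_le l hdec hzz W
      have hcard : W.card = k := by rw [hW]; exact PermPoly.card_filter_lt (by omega)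
      rw [hcard] at h3
      have h5 : PermPoly.psum l k = ∑ m ∈ W, l m := rfl
      rw [h5] at h3
      rw [hWx]
      exact h3
    · rw [hWx]
      exact hysum
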